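/- Normalized generalized packing corollary. Under the setup of the normalized generalized packing invariant (m ≥ 1, ε > 0, α = e^{4ε} − 1, points x_1,…,x_s ∈ P with 0 ≤ f_j(x_ℓ) ≤ 1, weights Y_j(t) = ∏_{ℓ≤t}(1 + α f_j(x_ℓ)), dual values v_t and average v̄, and λ̄ = max_j (1/s) Σ_ℓ f_j(x_ℓ)), if s ≥ ln(m) / (2ε²), then λ̄ ≤ v̄ + ε. -/

import Mathlib

open Real

/-- Hoeffding's lemma for a Bernoulli(p) variable. -/
lemma hoeffding_bernoulli (p β : ℝ) (hp0 : 0 ≤ p) (hp1 : p ≤ 1) (hβ : 0 ≤ β) :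
    Real.log (1 + (Real.exp β - 1) * p) ≤ β * p + β ^ 2 / 8 := by
  have hDpos : ∀ t : ℝ, 0 < 1 - p + p * Real.exp t := by
    intro t
    rcases eq_or_lt_of_le hp0 with h | h
    · simp [← h]
    · nlinarith [Real.exp_pos t]
  -- derivative facts
  have hD' : ∀ t : ℝ, HasDerivAt (fun t => 1 - p + p * Real.exp t) (p * Real.exp t) t := by
    intro t
    simpa using ((Real.hasDerivAt_exp t).const_mul p).const_add (1 - p)
  set k : ℝ → ℝ := fun t => p + t / 4 - p * Real.exp t / (1 - p + p * Real.exp t) with hk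
  have hk' : ∀ t : ℝ, HasDerivAt k
      (1 / 4 - p * Real.exp t * (1 - p) / (1 - p + p * Real.exp t) ^ 2) t := by
    intro t
    have hnum : HasDerivAt (fun t => p * Real.exp t) (p * Real.exp t) t :=
      (Real.hasDerivAt_exp t).const_mul p
    have hdiv := hnum.div (hD' t) (hDpos t).ne'
    have hlin : HasDerivAt (fun t : ℝ => p + t / 4) (1 / 4) t := by
      simpa using ((hasDerivAt_id t).div_const 4).const_add p
    have := hlin.sub hdiv
    refine this.congr_deriv ?_
    ring
  have hk'nonneg : ∀ t : ℝ,
      0 ≤ 1 / 4 - p * Real.exp t * (1 - p) / (1 - p + p * Real.exp t) ^ 2 := by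
    intro t
    have hD := hDpos t
    rw [sub_nonneg, div_le_iff₀ (by positivity)]
    nlinarith [sq_nonneg (1 - p - p * Real.exp t), Real.exp_pos t]
  have hkmono : Monotone k :=
    monotone_of_deriv_nonneg (fun t => (hk' t).differentiableAt)
      (fun t => by rw [(hk' t).deriv]; exact hk'nonneg t)
  have hk0 : k 0 = 0 := by simp [hk]
  have hknonneg : ∀ t : ℝ, 0 ≤ t → 0 ≤ k t := by
    intro t ht; rw [← hk0]; exact hkmono ht
  set h : ℝ → ℝ := fun t => p * t + t ^ 2 / 8 - Real.log (1 - p + p * Real.exp t) with hh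
  have hh' : ∀ t : ℝ, HasDerivAt h (k t) t := by
    intro t
    have hlog : HasDerivAt (fun t => Real.log (1 - p + p * Real.exp t))
        (p * Real.exp t / (1 - p + p * Real.exp t)) t := (hD' t).log (hDpos t).ne'
    have hpoly : HasDerivAt (fun t : ℝ => p * t + t ^ 2 / 8) (p + t / 4) t := by
      have h1 : HasDerivAt (fun t : ℝ => p * t) p t := by
        simpa using (hasDerivAt_id t).const_mul p
      have h2 : HasDerivAt (fun t : ℝ => t ^ 2 / 8) (t / 4) t := by
        have := (hasDerivAt_pow 2 t).div_const 8
        refine this.congr_deriv ?_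
        norm_num
        ring
      exact h1.add h2
    have := hpoly.sub hlog
    exact this
  have hhmono : MonotoneOn h (Set.Ici 0) := by
    apply monotoneOn_of_deriv_nonneg (convex_Ici 0)
      (fun t _ => ((hh' t).differentiableAt).continuousAt.continuousWithinAt)
      (fun t _ => (hh' t).differentiableAt.differentiableWithinAt)
    intro t ht
    rw [interior_Ici] at ht
    rw [(hh' t).deriv]
    exact hknonneg t (le_of_lt ht)
  have h0 : h 0 = 0 := by simp [hh]
  have hfinal : 0 ≤ h β := by
    rw [← h0]
    exact hhmono Set.self_mem_Ici hβ hβ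
  have heq : 1 + (Real.exp β - 1) * p = 1 - p + p * Real.exp β := by ring
  rw [heq]
  simp only [hh] at hfinal
  nlinarith [hfinal]

/-- Convexity lower bound: `β * a ≤ log (1 + (e^β - 1) * a)` for `a ∈ [0,1]`. -/
lemma log_one_add_ge (a β : ℝ) (ha0 : 0 ≤ a) (ha1 : a ≤ 1) (hβ : 0 ≤ β) :
    β * a ≤ Real.log (1 + (Real.exp β - 1) * a) := by
  have hpos : 0 < 1 + (Real.exp β - 1) * a := by
    nlinarith [Real.one_le_exp hβ]
  rw [Real.le_log_iff_exp_le hpos]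
  have := convexOn_exp.2 (Set.mem_univ (0 : ℝ)) (Set.mem_univ β)
    (by linarith : (0:ℝ) ≤ 1 - a) ha0 (by ring)
  simp only [smul_eq_mul, mul_zero, zero_add, Real.exp_zero, mul_one] at this
  rw [mul_comm]
  calc Real.exp (a * β) ≤ (1 - a) + a * Real.exp β := this
    _ = 1 + (Real.exp β - 1) * a := by ring


/-- **Generalized packing corollary** (normalized, Corollary 6 of the paper).
Under the setup of the generalized packing invariant, after
`s ≥ ln m / (2ε²)` iterations the primal value `lambar` and the average dual
value `vbar` satisfy `lambar ≤ vbar + ε`. -/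
theorem generalized_packing_duality_gap (n m s : ℕ) (hm : 1 ≤ m)
    (ε α : ℝ) (hε : 0 < ε) (hα : α = Real.exp (4 * ε) - 1)
    (P : Set (Fin n → ℝ)) (f : (Fin n → ℝ) → Fin m → ℝ)
    (hf : ∀ x ∈ P, ∀ j, f x j ∈ Set.Icc (0 : ℝ) 1)
    (x : ℕ → Fin n → ℝ) (hx : ∀ ℓ < s, x ℓ ∈ P)
    (Y : ℕ → Fin m → ℝ)
    (hY : ∀ t, ∀ j, Y t j = ∏ ℓ ∈ Finset.range t, (1 + α * f (x ℓ) j))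
    (v : ℕ → ℝ)
    (hv : ∀ t < s, v t = (∑ j, Y t j * f (x t) j) / (∑ j, Y t j))
    (vbar lambar : ℝ)
    (hvbar : vbar = (1 / (s : ℝ)) * ∑ t ∈ Finset.range s, v t)
    (hlambar : lambar = ⨆ j, (1 / (s : ℝ)) * ∑ ℓ ∈ Finset.range s, f (x ℓ) j)
    (hs : Real.log m / (2 * ε ^ 2) ≤ (s : ℝ)) :
    lambar ≤ vbar + ε := by
  haveI : Nonempty (Fin m) := Fin.pos_iff_nonempty.mp hm
  -- bounds on f values
  have ha0 : ∀ ℓ < s, ∀ j, 0 ≤ f (x ℓ) j := fun ℓ hℓ j => (hf _ (hx ℓ hℓ) j).1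
  have ha1 : ∀ ℓ < s, ∀ j, f (x ℓ) j ≤ 1 := fun ℓ hℓ j => (hf _ (hx ℓ hℓ) j).2
  rcases Nat.eq_zero_or_pos s with hs0 | hspos
  · subst hs0
    simp only [Finset.range_zero, Finset.sum_empty, mul_zero] at hvbar hlambar
    rw [hlambar, hvbar, ciSup_const]
    linarith
  have hsR : (0:ℝ) < s := by exact_mod_cast hspos
  have hβ : (0:ℝ) < 4 * ε := by linarith
  have hαpos : 0 < α := by
    rw [hα, sub_pos]
    calc (1:ℝ) = Real.exp 0 := by simp
      _ < Real.exp (4 * ε) := Real.exp_lt_exp.mpr hβ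
  -- weights are at least 1
  have hY1 : ∀ t ≤ s, ∀ j, 1 ≤ Y t j := by
    intro t ht j
    rw [hY]
    calc (1:ℝ) = ∏ ℓ ∈ Finset.range t, 1 := by simp
      _ ≤ ∏ ℓ ∈ Finset.range t, (1 + α * f (x ℓ) j) := by
        apply Finset.prod_le_prod (fun i _ => zero_le_one)
        intro i hi
        have hi' : i < s := lt_of_lt_of_le (Finset.mem_range.mp hi) ht
        nlinarith [ha0 i hi' j]
  have hSpos : ∀ t ≤ s, 0 < ∑ j, Y t j := by
    intro t ht
    apply Finset.sum_pos (fun j _ => lt_of_lt_of_le one_pos (hY1 t ht j))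
    exact Finset.univ_nonempty
  -- dual values in [0,1]
  have hv0 : ∀ t < s, 0 ≤ v t := by
    intro t ht
    rw [hv t ht]
    apply div_nonneg _ (hSpos t ht.le).le
    apply Finset.sum_nonneg
    intro j _
    exact mul_nonneg (le_trans zero_le_one (hY1 t ht.le j)) (ha0 t ht j)
  have hv1 : ∀ t < s, v t ≤ 1 := by
    intro t ht
    rw [hv t ht, div_le_one (hSpos t ht.le)]
    apply Finset.sum_le_sum
    intro j _
    calc Y t j * f (x t) j ≤ Y t j * 1 :=
          mul_le_mul_of_nonneg_left (ha1 t ht j) (le_trans zero_le_one (hY1 t ht.le j))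
      _ = Y t j := mul_one _
  -- recurrence for the sum of weights
  have hstep : ∀ t < s, ∑ j, Y (t+1) j = (∑ j, Y t j) * (1 + α * v t) := by
    intro t ht
    have h1 : ∀ j, Y (t+1) j = Y t j + α * (Y t j * f (x t) j) := by
      intro j
      rw [hY, hY, Finset.prod_range_succ]
      ring
    have h2 : ∑ j, Y (t+1) j = (∑ j, Y t j) + α * ∑ j, Y t j * f (x t) j := by
      simp only [h1, Finset.sum_add_distrib, Finset.mul_sum]
    rw [h2, hv t ht, mul_add, mul_one]
    have hS := (hSpos t ht.le).ne'
    field_simp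
  -- telescoping
  have htel : ∀ u ≤ s, ∑ j, Y u j = m * ∏ t ∈ Finset.range u, (1 + α * v t) := by
    intro u
    induction u with
    | zero => intro _; simp [hY]
    | succ u ih =>
      intro hu
      have hu' : u < s := hu
      rw [hstep u hu', ih hu'.le, Finset.prod_range_succ]
      ring
  have hvfac : ∀ t < s, 0 < 1 + α * v t := by
    intro t ht
    nlinarith [hv0 t ht, hαpos]
  have hafac : ∀ ℓ < s, ∀ j, 0 < 1 + α * f (x ℓ) j := by
    intro ℓ hℓ j
    nlinarith [ha0 ℓ hℓ j, hαpos]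
  have hP2pos : 0 < ∏ t ∈ Finset.range s, (1 + α * v t) :=
    Finset.prod_pos (fun t ht => hvfac t (Finset.mem_range.mp ht))
  have hmpos : (0:ℝ) < m := by exact_mod_cast hm
  -- key per-coordinate inequality
  have hkey : ∀ j : Fin m,
      ∑ ℓ ∈ Finset.range s, f (x ℓ) j ≤ (∑ t ∈ Finset.range s, v t) + ε * s := by
    intro j
    have hP1pos : 0 < ∏ ℓ ∈ Finset.range s, (1 + α * f (x ℓ) j) :=
      Finset.prod_pos (fun ℓ hℓ => hafac ℓ (Finset.mem_range.mp hℓ) j)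
    have hle : ∏ ℓ ∈ Finset.range s, (1 + α * f (x ℓ) j)
        ≤ (m : ℝ) * ∏ t ∈ Finset.range s, (1 + α * v t) := by
      rw [← htel s le_rfl, ← hY s j]
      exact Finset.single_le_sum
        (fun i _ => le_trans zero_le_one (hY1 s le_rfl i)) (Finset.mem_univ j)
    have hlog := Real.log_le_log hP1pos hle
    rw [Real.log_prod (fun ℓ hℓ => (hafac ℓ (Finset.mem_range.mp hℓ) j).ne'),
        Real.log_mul hmpos.ne' hP2pos.ne',
        Real.log_prod (fun t ht => (hvfac t (Finset.mem_range.mp ht)).ne')] at hlog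
    -- lower bound each log term on the left
    have hlow : ∑ ℓ ∈ Finset.range s, (4 * ε) * f (x ℓ) j
        ≤ ∑ ℓ ∈ Finset.range s, Real.log (1 + α * f (x ℓ) j) := by
      apply Finset.sum_le_sum
      intro ℓ hℓ
      have hℓ' := Finset.mem_range.mp hℓ
      have := log_one_add_ge (f (x ℓ) j) (4 * ε) (ha0 ℓ hℓ' j) (ha1 ℓ hℓ' j) hβ.le
      rw [hα]
      exact this
    -- upper bound each log term on the right (Hoeffding)
    have hup : ∑ t ∈ Finset.range s, Real.log (1 + α * v t)
        ≤ ∑ t ∈ Finset.range s, ((4 * ε) * v t + 2 * ε ^ 2) := by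
      apply Finset.sum_le_sum
      intro t ht
      have ht' := Finset.mem_range.mp ht
      have := hoeffding_bernoulli (v t) (4 * ε) (hv0 t ht') (hv1 t ht') hβ.le
      rw [hα]
      calc Real.log (1 + (Real.exp (4 * ε) - 1) * v t)
          ≤ 4 * ε * v t + (4 * ε) ^ 2 / 8 := this
        _ = 4 * ε * v t + 2 * ε ^ 2 := by ring
    have hlogm : Real.log m ≤ 2 * ε ^ 2 * s := by
      rw [div_le_iff₀ (by positivity : (0:ℝ) < 2 * ε ^ 2)] at hs
      linarith [hs]
    have hsum1 : ∑ ℓ ∈ Finset.range s, (4 * ε) * f (x ℓ) j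
        = (4 * ε) * ∑ ℓ ∈ Finset.range s, f (x ℓ) j := by rw [Finset.mul_sum]
    have hsum2 : ∑ t ∈ Finset.range s, ((4 * ε) * v t + 2 * ε ^ 2)
        = (4 * ε) * (∑ t ∈ Finset.range s, v t) + 2 * ε ^ 2 * s := by
      rw [Finset.sum_add_distrib, ← Finset.mul_sum, Finset.sum_const, Finset.card_range]
      ring
    have H : (4 * ε) * ∑ ℓ ∈ Finset.range s, f (x ℓ) j
        ≤ (4 * ε) * ((∑ t ∈ Finset.range s, v t) + ε * s) := by
      have := le_trans hlow (le_trans hlog (by linarith [hup, hsum2] :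
        Real.log m + ∑ t ∈ Finset.range s, Real.log (1 + α * v t)
          ≤ Real.log m + (4 * ε) * (∑ t ∈ Finset.range s, v t) + 2 * ε ^ 2 * s))
      rw [hsum1] at this
      nlinarith [this, hlogm]
    exact le_of_mul_le_mul_left H hβ
  -- conclude
  rw [hlambar, hvbar]
  apply ciSup_le
  intro j
  have := hkey j
  have h2 : (1 / (s:ℝ)) * ∑ ℓ ∈ Finset.range s, f (x ℓ) j
      ≤ (1 / (s:ℝ)) * ((∑ t ∈ Finset.range s, v t) + ε * s) :=
    mul_le_mul_of_nonneg_left this (by positivity)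
  calc (1 / (s:ℝ)) * ∑ ℓ ∈ Finset.range s, f (x ℓ) j
      ≤ (1 / (s:ℝ)) * ((∑ t ∈ Finset.range s, v t) + ε * s) := h2
    _ = (1 / (s:ℝ)) * (∑ t ∈ Finset.range s, v t) + ε := by
        field_simp
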